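/- Let G be a connected graph with no isolated vertices, no leaves, and Δ(G) ≥ 1 (i.e., G is a cactus in the paper's terminology). Then for every two edges a, b of G there exists a bicycle subgraph of G containing both a and b. -/

import Mathlib

open scoped Classical

/-- A finite multigraph: loops and parallel edges allowed. -/
structure Multigraph where
  V : Type
  E : Type
  [fintypeV : Fintype V]
  [fintypeE : Fintype E]
  ends : E → Sym2 V

attribute [instance] Multigraph.fintypeV Multigraph.fintypeE

namespace Multigraph

variable (G : Multigraph)

/-- Vertex support of an edge set: vertices incident to some edge of `X`. -/
noncomputable def supp (X : Finset G.E) : Finset G.V :=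
  Finset.univ.filter (fun v => ∃ e ∈ X, v ∈ G.ends e)

/-- `Δ` of the subgraph induced by the edge set `X`. -/
noncomputable def delta (X : Finset G.E) : ℤ := (X.card : ℤ) - (G.supp X).card

/-- `Δ(G) = |E(G)| - |V(G)|`. -/
noncomputable def deltaG : ℤ := (Fintype.card G.E : ℤ) - (Fintype.card G.V : ℤ)

/-- Degree of `v` in the edge set `X`: loops count twice. -/
noncomputable def degIn (X : Finset G.E) (v : G.V) : ℕ :=
  ∑ e ∈ X, (if G.ends e = s(v, v) then 2 else if v ∈ G.ends e then 1 else 0)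

/-- `u` and `v` are joined by an edge of `X`. -/
def adjIn (X : Finset G.E) (u v : G.V) : Prop := ∃ e ∈ X, G.ends e = s(u, v)

/-- Reachability using only edges of `X`. -/
def reachIn (X : Finset G.E) : G.V → G.V → Prop :=
  Relation.ReflTransGen (G.adjIn X)

/-- The edge set `X` induces a connected subgraph. -/
def ConnSet (X : Finset G.E) : Prop :=
  X.Nonempty ∧ ∀ u ∈ G.supp X, ∀ v ∈ G.supp X, G.reachIn X u v

/-- Edges of the component of the subgraph `(V, X)` containing vertex `v`. -/
noncomputable def compEdges (X : Finset G.E) (v : G.V) : Finset G.E :=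
  X.filter (fun f => ∃ u ∈ G.ends f, G.reachIn X v u)

/-- Vertices of the component of `v` in the graph `(V, X)` (all vertices kept). -/
noncomputable def compVerts (X : Finset G.E) (v : G.V) : Finset G.V :=
  Finset.univ.filter (fun u => G.reachIn X v u)

/-- `C` is (the edge set of) a cycle: connected, every vertex of degree 2. -/
def IsCycleSet (C : Finset G.E) : Prop :=
  G.ConnSet C ∧ ∀ v ∈ G.supp C, G.degIn C v = 2

/-- `T` induces a tree. -/
def IsTreeSet (T : Finset G.E) : Prop := G.ConnSet T ∧ G.delta T = -1

/-- The component of `v` in `(V, X)` is a tree (possibly a single vertex). -/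
def IsTreeCompAt (X : Finset G.E) (v : G.V) : Prop :=
  (G.compEdges X v).card + 1 = (G.compVerts X v).card

/-- The number of tree components of the graph `(V, X)`. -/
noncomputable def treeCount (X : Finset G.E) : ℕ :=
  (((Finset.univ : Finset G.V).filter (fun v => G.IsTreeCompAt X v)).image
    (fun v => G.compVerts X v)).card

/-- The graph `G` has no isolated vertices. -/
def NoIso : Prop := ∀ v : G.V, ∃ e : G.E, v ∈ G.ends e

/-- The graph `G` has no leaves. -/
def NoLeaf : Prop := ∀ v : G.V, G.degIn Finset.univ v ≠ 1

/-- The graph `G` is connected. -/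
def GConn : Prop := Nonempty G.V ∧ ∀ u v : G.V, G.reachIn Finset.univ u v

/-- `G` is a bicycle: connected, leafless, with `Δ(G) = 1`. -/
def IsBicycle : Prop := G.GConn ∧ G.NoLeaf ∧ G.deltaG = 1

/-- One round of deleting all edges incident to a leaf. -/
noncomputable def pruneStep (X : Finset G.E) : Finset G.E :=
  X.filter (fun e => ∀ v ∈ G.ends e, G.degIn X v ≠ 1)

/-- Edge set obtained from `G` by repeatedly deleting leaves until none remain. -/
noncomputable def kernelSet : Finset G.E :=
  G.pruneStep^[Fintype.card G.E] Finset.univ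

/-- `Δ` of the component of `G` containing `v`. -/
noncomputable def compDelta (v : G.V) : ℤ :=
  ((G.compEdges Finset.univ v).card : ℤ) - ((G.compVerts Finset.univ v).card : ℤ)

/-- The core `[G]`: union of the kernels of the components `A` with `Δ(A) ≥ 1`. -/
noncomputable def coreSet : Finset G.E :=
  G.kernelSet.filter (fun e => ∀ v ∈ G.ends e, 1 ≤ G.compDelta v)

/-- `P` is the edge set of an `(x,y)`-path. -/
def IsPathSet (P : Finset G.E) (x y : G.V) : Prop :=
  G.ConnSet P ∧ x ≠ y ∧ x ∈ G.supp P ∧ y ∈ G.supp P ∧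
  G.degIn P x = 1 ∧ G.degIn P y = 1 ∧
  ∀ v ∈ G.supp P, v ≠ x → v ≠ y → G.degIn P v = 2

/-- `C` induces a bicycle subgraph: connected, leafless, `Δ = 1`. -/
def IsBicycleSet (C : Finset G.E) : Prop :=
  G.ConnSet C ∧ (∀ v ∈ G.supp C, G.degIn C v ≠ 1) ∧ G.delta C = 1

/-- Circuits of the `k`-circular matroid `M_k(G)`: minimal nonempty edge sets `C`
with `|C| = |V(G⟨C⟩)| + k`, i.e. `Δ(G⟨C⟩) = k`. -/
def IsCircuitSet (k : ℕ) (C : Finset G.E) : Prop :=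
  (C.Nonempty ∧ G.delta C = (k : ℤ)) ∧
  ∀ D ⊂ C, ¬ (D.Nonempty ∧ G.delta D = (k : ℤ))

/-- Independent sets of `M_k(G)`. -/
def Indep (k : ℕ) (I : Finset G.E) : Prop := ∀ C ⊆ I, ¬ G.IsCircuitSet k C

/-- Bases of `M_k(G)`: maximal independent sets. -/
def IsBase (k : ℕ) (B : Finset G.E) : Prop :=
  G.Indep k B ∧ ∀ B' : Finset G.E, G.Indep k B' → B ⊆ B' → B' = B

/-- The matroid `M_k(G)` is connected: at least two elements and every two
elements lie on a common circuit. -/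
def MConn (k : ℕ) : Prop :=
  2 ≤ Fintype.card G.E ∧
  ∀ a b : G.E, ∃ C : Finset G.E, G.IsCircuitSet k C ∧ a ∈ C ∧ b ∈ C

end Multigraph
namespace Multigraph

variable (G : Multigraph)

/-- Contribution of edge `e` to the degree of `v`. -/
noncomputable def eps (e : G.E) (v : G.V) : ℕ :=
  if G.ends e = s(v, v) then 2 else if v ∈ G.ends e then 1 else 0

lemma degIn_eq_sum (X : Finset G.E) (v : G.V) :
    G.degIn X v = ∑ e ∈ X, G.eps e v := rfl

variable {G}

lemma eps_ne_zero {e : G.E} {v : G.V} (h : G.eps e v ≠ 0) : v ∈ G.ends e := by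
  unfold eps at h
  split_ifs at h with h1 h2
  · rw [h1]; simp [Sym2.mem_iff]
  · exact h2
  · simp at h

lemma eps_eq_zero {e : G.E} {v : G.V} (h : v ∉ G.ends e) : G.eps e v = 0 := by
  by_contra hc; exact h (eps_ne_zero hc)

lemma eps_loop {e : G.E} {v : G.V} (h : G.ends e = s(v, v)) : G.eps e v = 2 := by
  unfold eps; rw [if_pos h]

lemma eps_of_mem {e : G.E} {v : G.V} (h : v ∈ G.ends e) : 1 ≤ G.eps e v := by
  unfold eps; split_ifs <;> omega

lemma eps_le_two (e : G.E) (v : G.V) : G.eps e v ≤ 2 := by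
  unfold eps; split_ifs <;> omega

lemma eps_nonloop {e : G.E} {v w : G.V} (h : G.ends e = s(v, w)) (hvw : w ≠ v) :
    G.eps e v = 1 := by
  unfold eps
  rw [if_neg, if_pos]
  · rw [h]; simp [Sym2.mem_iff]
  · rw [h]; intro hc
    rw [Sym2.eq_iff] at hc
    rcases hc with ⟨h1, h2⟩ | ⟨h1, h2⟩ <;> exact hvw h2

lemma mem_supp_iff {X : Finset G.E} {v : G.V} :
    v ∈ G.supp X ↔ ∃ e ∈ X, v ∈ G.ends e := by
  simp [supp]

lemma mem_supp_of_edge {X : Finset G.E} {e : G.E} {v : G.V} (he : e ∈ X) (hv : v ∈ G.ends e) :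
    v ∈ G.supp X := mem_supp_iff.mpr ⟨e, he, hv⟩

lemma degIn_le_of_subset {X Y : Finset G.E} (h : X ⊆ Y) (v : G.V) :
    G.degIn X v ≤ G.degIn Y v := by
  rw [degIn_eq_sum, degIn_eq_sum]
  exact Finset.sum_le_sum_of_subset h

lemma degIn_insert {X : Finset G.E} {e : G.E} (he : e ∉ X) (v : G.V) :
    G.degIn (insert e X) v = G.eps e v + G.degIn X v := by
  rw [degIn_eq_sum, degIn_eq_sum, Finset.sum_insert he]

lemma one_le_degIn_of_mem_supp {X : Finset G.E} {v : G.V} (h : v ∈ G.supp X) :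
    1 ≤ G.degIn X v := by
  obtain ⟨e, he, hv⟩ := mem_supp_iff.mp h
  calc 1 ≤ G.eps e v := eps_of_mem hv
  _ ≤ G.degIn X v := by
      rw [degIn_eq_sum]
      exact Finset.single_le_sum (f := fun f => G.eps f v) (fun _ _ => Nat.zero_le _) he

lemma mem_supp_of_degIn_ne_zero {X : Finset G.E} {v : G.V} (h : G.degIn X v ≠ 0) :
    v ∈ G.supp X := by
  rw [degIn_eq_sum] at h
  obtain ⟨e, he, hne⟩ := Finset.exists_ne_zero_of_sum_ne_zero h
  exact mem_supp_of_edge he (eps_ne_zero hne)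

/-- The endpoints of an edge as a finset. -/
noncomputable def endsF (G : Multigraph) (e : G.E) : Finset G.V :=
  Finset.univ.filter (fun v => v ∈ G.ends e)

lemma mem_endsF {e : G.E} {v : G.V} : v ∈ G.endsF e ↔ v ∈ G.ends e := by
  simp [endsF]

lemma endsF_pair {e : G.E} {v w : G.V} (h : G.ends e = s(v, w)) :
    G.endsF e = {v, w} := by
  ext z
  simp only [mem_endsF, h, Sym2.mem_iff, Finset.mem_insert, Finset.mem_singleton]

lemma supp_insert (X : Finset G.E) (e : G.E) :
    G.supp (insert e X) = G.endsF e ∪ G.supp X := by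
  ext z
  simp only [mem_supp_iff, Finset.mem_union, mem_endsF, Finset.mem_insert]
  constructor
  · rintro ⟨f, (rfl | hf), hz⟩
    · exact Or.inl hz
    · exact Or.inr ⟨f, hf, hz⟩
  · rintro (hz | ⟨f, hf, hz⟩)
    · exact ⟨e, Or.inl rfl, hz⟩
    · exact ⟨f, Or.inr hf, hz⟩

lemma supp_singleton (e : G.E) : G.supp {e} = G.endsF e := by
  ext z; simp [mem_supp_iff, mem_endsF]

end Multigraph
namespace Multigraph

variable {G : Multigraph}

/-- The set of leaves (degree-1 vertices) of `X`. -/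
noncomputable def leafSet (G : Multigraph) (X : Finset G.E) : Finset G.V :=
  (G.supp X).filter (fun v => G.degIn X v = 1)

/-- Number of leaves of `X`. -/
noncomputable def LL (G : Multigraph) (X : Finset G.E) : ℤ := (G.leafSet X).card

lemma mem_leafSet {X : Finset G.E} {v : G.V} :
    v ∈ G.leafSet X ↔ v ∈ G.supp X ∧ G.degIn X v = 1 := by
  simp [leafSet]

lemma LL_nonneg (X : Finset G.E) : 0 ≤ G.LL X := Int.natCast_nonneg _

/-- per-edge degree sum bound -/
lemma sum_eps_le (X : Finset G.E) (A : Finset G.V) (e : G.E) :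
    ∑ v ∈ A, G.eps e v ≤ 2 := by
  obtain ⟨⟨p, q⟩, hpq⟩ := Quot.exists_rep (G.ends e)
  have hends : G.ends e = s(p, q) := hpq.symm
  have hsub : ∑ v ∈ A, G.eps e v ≤ ∑ v ∈ ({p, q} : Finset G.V), G.eps e v := by
    rw [← Finset.sum_filter_add_sum_filter_not A (fun v => v ∈ ({p,q} : Finset G.V))]
    have h2 : ∑ v ∈ A.filter (fun v => v ∉ ({p,q} : Finset G.V)), G.eps e v = 0 := by
      apply Finset.sum_eq_zero
      intro v hv
      simp only [Finset.mem_filter, Finset.mem_insert, Finset.mem_singleton] at hv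
      apply eps_eq_zero
      rw [hends, Sym2.mem_iff]
      tauto
    rw [h2, add_zero]
    exact Finset.sum_le_sum_of_subset (fun z hz => (Finset.mem_filter.mp hz).2)
  refine hsub.trans ?_
  by_cases hpq2 : p = q
  · subst hpq2
    simp [eps_le_two]
  · rw [Finset.sum_pair hpq2]
    by_cases hq : q = p
    · exact absurd hq.symm hpq2
    · rw [eps_nonloop hends hq, eps_nonloop (hends.trans (Sym2.eq_swap)) (Ne.symm hq)]

lemma sum_deg_le (X : Finset G.E) : ∑ v ∈ G.supp X, G.degIn X v ≤ 2 * X.card := by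
  have : ∑ v ∈ G.supp X, G.degIn X v = ∑ e ∈ X, ∑ v ∈ G.supp X, G.eps e v := by
    rw [Finset.sum_comm]
    rfl
  rw [this]
  calc ∑ e ∈ X, ∑ v ∈ G.supp X, G.eps e v ≤ ∑ _e ∈ X, 2 :=
        Finset.sum_le_sum (fun e _ => sum_eps_le X (G.supp X) e)
  _ = 2 * X.card := by rw [Finset.sum_const, smul_eq_mul, mul_comm]

/-- Handshake-type inequality: `2|supp X| ≤ 2|X| + LL X`. -/
lemma handshake (X : Finset G.E) :
    2 * ((G.supp X).card : ℤ) ≤ 2 * (X.card : ℤ) + G.LL X := by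
  have key : 2 * (G.supp X).card ≤ 2 * X.card + (G.leafSet X).card := by
    have h1 : ∀ v ∈ G.supp X, 2 ≤ G.degIn X v + (if G.degIn X v = 1 then 1 else 0) := by
      intro v hv
      have := one_le_degIn_of_mem_supp hv
      split_ifs with h <;> omega
    have h2 : 2 * (G.supp X).card = ∑ _v ∈ G.supp X, 2 := by
      rw [Finset.sum_const, smul_eq_mul, mul_comm]
    have h3 : ∑ v ∈ G.supp X, (G.degIn X v + (if G.degIn X v = 1 then 1 else 0))
        = ∑ v ∈ G.supp X, G.degIn X v + (G.leafSet X).card := by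
      rw [Finset.sum_add_distrib]
      congr 1
      rw [leafSet, Finset.card_filter]
    have h4 : ∑ _v ∈ G.supp X, 2 ≤ ∑ v ∈ G.supp X, (G.degIn X v + (if G.degIn X v = 1 then 1 else 0)) :=
      Finset.sum_le_sum h1
    have := sum_deg_le X
    omega
  have := Int.ofNat_le.mpr key
  push_cast at this ⊢
  unfold LL
  push_cast
  omega

lemma adjIn_symm {X : Finset G.E} {u v : G.V} (h : G.adjIn X u v) : G.adjIn X v u := by
  obtain ⟨e, he, hε⟩ := h
  exact ⟨e, he, hε.trans Sym2.eq_swap⟩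

lemma reachIn_symm {X : Finset G.E} {u v : G.V} (h : G.reachIn X u v) : G.reachIn X v u := by
  induction h with
  | refl => exact Relation.ReflTransGen.refl
  | tail _ h2 ih => exact Relation.ReflTransGen.head (adjIn_symm h2) ih

lemma reachIn_mono {X Y : Finset G.E} (hXY : X ⊆ Y) {u v : G.V} (h : G.reachIn X u v) :
    G.reachIn Y u v := by
  induction h with
  | refl => exact Relation.ReflTransGen.refl
  | tail _ h2 ih =>
      obtain ⟨e, he, hε⟩ := h2
      exact Relation.ReflTransGen.tail ih ⟨e, hXY he, hε⟩

lemma reachIn_trans {X : Finset G.E} {u v w : G.V} (h1 : G.reachIn X u v)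
    (h2 : G.reachIn X v w) : G.reachIn X u w := Relation.ReflTransGen.trans h1 h2

/-- If `u ≠ v` are both endpoints of `e`, then `ends e = s(u,v)`. -/
lemma ends_eq_of_mem {e : G.E} {u v : G.V} (hu : u ∈ G.ends e) (hv : v ∈ G.ends e)
    (huv : u ≠ v) : G.ends e = s(u, v) := by
  obtain ⟨⟨p, q⟩, hpq⟩ := Quot.exists_rep (G.ends e)
  have hends : G.ends e = s(p, q) := hpq.symm
  rw [hends, Sym2.mem_iff] at hu hv
  rw [hends, Sym2.eq_iff]
  rcases hu with rfl | rfl <;> rcases hv with rfl | rfl <;> tauto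

lemma reachIn_of_mem_ends {X : Finset G.E} {e : G.E} (he : e ∈ X) {u v : G.V}
    (hu : u ∈ G.ends e) (hv : v ∈ G.ends e) : G.reachIn X u v := by
  by_cases huv : u = v
  · subst huv; exact Relation.ReflTransGen.refl
  · exact Relation.ReflTransGen.single ⟨e, he, ends_eq_of_mem hu hv huv⟩

/-- Inserting an edge with an endpoint in the support preserves connectivity. -/
lemma conn_insert {X : Finset G.E} {e : G.E} {v : G.V} (hc : G.ConnSet X)
    (hv : v ∈ G.ends e) (hvs : v ∈ G.supp X) : G.ConnSet (insert e X) := by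
  constructor
  · exact ⟨e, Finset.mem_insert_self e X⟩
  · have key : ∀ z ∈ G.supp (insert e X), G.reachIn (insert e X) z v := by
      intro z hz
      rw [supp_insert, Finset.mem_union] at hz
      rcases hz with hz | hz
      · exact reachIn_of_mem_ends (Finset.mem_insert_self e X) (mem_endsF.mp hz) hv
      · exact reachIn_mono (Finset.subset_insert e X) (hc.2 z hz v hvs)
    intro z1 hz1 z2 hz2
    exact reachIn_trans (key z1 hz1) (reachIn_symm (key z2 hz2))

lemma connSet_singleton (e : G.E) : G.ConnSet {e} := by
  constructor
  · exact ⟨e, Finset.mem_singleton_self e⟩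
  · intro u hu v hv
    rw [supp_singleton, mem_endsF] at hu hv
    exact reachIn_of_mem_ends (Finset.mem_singleton_self e) hu hv

/-- The main invariant for the growing procedure. -/
def InvCore (G : Multigraph) (X : Finset G.E) : Prop :=
  G.ConnSet X ∧ G.LL X ≤ 2 ∧ G.delta X + G.LL X ≤ 1

lemma reach_head {X : Finset G.E} {u v : G.V} (h : G.reachIn X u v) (huv : u ≠ v) :
    ∃ e ∈ X, u ∈ G.ends e := by
  rw [reachIn] at h
  rcases (Relation.ReflTransGen.cases_head h) with rfl | ⟨c, hc, _⟩
  · exact absurd rfl huv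
  · obtain ⟨e, he, hε⟩ := hc
    exact ⟨e, he, by rw [hε]; simp [Sym2.mem_iff]⟩

end Multigraph
namespace Multigraph

variable {G : Multigraph}

lemma delta_def (X : Finset G.E) : G.delta X = (X.card : ℤ) - (G.supp X).card := rfl

/-- Inserting a new edge at a leaf preserves the invariant. -/
lemma grow_leaf {X : Finset G.E} {v : G.V} {e : G.E} (hI : G.InvCore X) (he : e ∉ X)
    (hv : v ∈ G.ends e) (hd : G.degIn X v = 1) : G.InvCore (insert e X) := by
  have hvs : v ∈ G.supp X := mem_supp_of_degIn_ne_zero (by omega)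
  have hvleaf : v ∈ G.leafSet X := mem_leafSet.mpr ⟨hvs, hd⟩
  obtain ⟨z, hz⟩ : ∃ z, G.ends e = s(v, z) :=
    ⟨Sym2.Mem.other hv, (Sym2.other_spec hv).symm⟩
  have hconn' : G.ConnSet (insert e X) := conn_insert hI.1 hv hvs
  have hcard' : ((insert e X).card : ℤ) = X.card + 1 := by
    rw [Finset.card_insert_of_notMem he]; push_cast; ring
  have hdeg' : ∀ p, G.degIn (insert e X) p = G.eps e p + G.degIn X p :=
    degIn_insert he
  have hmem_ends : ∀ p, p ∈ G.ends e ↔ p = v ∨ p = z := by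
    intro p; rw [hz, Sym2.mem_iff]
  have hLL2 := hI.2.1
  have hsum := hI.2.2
  have hhs := handshake (G := G) X
  by_cases hzv : z = v
  · -- loop at v
    have hz' : G.ends e = s(v, v) := by rw [hz, hzv]
    have hmem_ends' : ∀ p, p ∈ G.ends e ↔ p = v := by
      intro p; rw [hz', Sym2.mem_iff]; tauto
    have hsupp' : G.supp (insert e X) = G.supp X := by
      rw [supp_insert, endsF_pair hz']
      rw [Finset.union_eq_right.mpr]
      intro p hp
      rw [Finset.mem_insert, Finset.mem_singleton] at hp
      rcases hp with rfl | rfl <;> exact hvs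
    have hdelta' : G.delta (insert e X) = G.delta X + 1 := by
      rw [delta_def, delta_def, hsupp', hcard']; ring
    have hls : G.leafSet (insert e X) ⊆ (G.leafSet X).erase v := by
      intro p hp
      rw [mem_leafSet] at hp
      obtain ⟨hp1, hp2⟩ := hp
      rw [hdeg'] at hp2
      have hpv : p ≠ v := by
        rintro rfl
        rw [eps_loop hz'] at hp2; omega
      have hpe : p ∉ G.ends e := by
        rw [hmem_ends']; tauto
      rw [eps_eq_zero hpe] at hp2
      rw [Finset.mem_erase]
      rw [hsupp'] at hp1
      exact ⟨hpv, mem_leafSet.mpr ⟨hp1, by omega⟩⟩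
    have hLL' : G.LL (insert e X) + 1 ≤ G.LL X := by
      have h1 := Finset.card_le_card hls
      have h2 := Finset.card_erase_of_mem hvleaf
      have h3 : 1 ≤ (G.leafSet X).card := Finset.card_pos.mpr ⟨v, hvleaf⟩
      unfold LL; omega
    have hn := LL_nonneg (G := G) (insert e X)
    refine ⟨hconn', by omega, ?_⟩
    rw [hdelta']; omega
  · -- non-loop
    have hεv : G.eps e v = 1 := eps_nonloop hz hzv
    have hεz : G.eps e z = 1 := eps_nonloop (hz.trans Sym2.eq_swap) (Ne.symm hzv)
    by_cases hzs : z ∈ G.supp X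
    · -- other endpoint already in the graph
      have hsupp' : G.supp (insert e X) = G.supp X := by
        rw [supp_insert, endsF_pair hz]
        rw [Finset.union_eq_right.mpr]
        intro p hp
        rw [Finset.mem_insert, Finset.mem_singleton] at hp
        rcases hp with rfl | rfl
        · exact hvs
        · exact hzs
      have hdelta' : G.delta (insert e X) = G.delta X + 1 := by
        rw [delta_def, delta_def, hsupp', hcard']; ring
      by_cases hdz : G.degIn X z = 1
      · -- connecting two leaves
        have hzleaf : z ∈ G.leafSet X := mem_leafSet.mpr ⟨hzs, hdz⟩
        have hpair : ({v, z} : Finset G.V) ⊆ G.leafSet X := by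
          intro p hp
          rw [Finset.mem_insert, Finset.mem_singleton] at hp
          rcases hp with rfl | rfl <;> assumption
        have hcard2 : ({v, z} : Finset G.V).card = 2 := by
          rw [Finset.card_insert_of_notMem (by simpa using Ne.symm hzv), Finset.card_singleton]
        have hLLge : 2 ≤ G.LL X := by
          have := Finset.card_le_card hpair
          unfold LL; omega
        have hLLeq : G.LL X = 2 := le_antisymm hLL2 hLLge
        have hleq : G.leafSet X = {v, z} := by
          apply (Finset.eq_of_subset_of_card_le hpair ?_).symm
          have : (G.leafSet X).card = 2 := by
            have := hLLeq; unfold LL at this; exact_mod_cast this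
          omega
        have hdelta : G.delta X = -1 := by
          have hdd := delta_def (G := G) X
          omega
        have hls : G.leafSet (insert e X) = ∅ := by
          apply Finset.eq_empty_of_forall_notMem
          intro p hp
          rw [mem_leafSet] at hp
          obtain ⟨hp1, hp2⟩ := hp
          rw [hdeg'] at hp2
          have hpv : p ≠ v := by rintro rfl; rw [hεv] at hp2; omega
          have hpz : p ≠ z := by rintro rfl; rw [hεz] at hp2; omega
          have hpe : p ∉ G.ends e := by rw [hmem_ends]; tauto
          rw [eps_eq_zero hpe] at hp2
          rw [hsupp'] at hp1
          have : p ∈ G.leafSet X := mem_leafSet.mpr ⟨hp1, by omega⟩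
          rw [hleq, Finset.mem_insert, Finset.mem_singleton] at this
          tauto
        have hLL' : G.LL (insert e X) = 0 := by unfold LL; rw [hls]; simp
        refine ⟨hconn', by omega, ?_⟩
        rw [hdelta', hdelta, hLL']
        norm_num
      · -- other endpoint is not a leaf
        have h1z : 1 ≤ G.degIn X z := one_le_degIn_of_mem_supp hzs
        have hls : G.leafSet (insert e X) ⊆ (G.leafSet X).erase v := by
          intro p hp
          rw [mem_leafSet] at hp
          obtain ⟨hp1, hp2⟩ := hp
          rw [hdeg'] at hp2
          have hpv : p ≠ v := by rintro rfl; rw [hεv] at hp2; omega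
          have hpz : p ≠ z := by rintro rfl; rw [hεz] at hp2; omega
          have hpe : p ∉ G.ends e := by rw [hmem_ends]; tauto
          rw [eps_eq_zero hpe] at hp2
          rw [hsupp'] at hp1
          rw [Finset.mem_erase]
          exact ⟨hpv, mem_leafSet.mpr ⟨hp1, by omega⟩⟩
        have hLL' : G.LL (insert e X) + 1 ≤ G.LL X := by
          have h1 := Finset.card_le_card hls
          have h2 := Finset.card_erase_of_mem hvleaf
          have h3 : 1 ≤ (G.leafSet X).card := Finset.card_pos.mpr ⟨v, hvleaf⟩
          unfold LL; omega
        have hn := LL_nonneg (G := G) (insert e X)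
        refine ⟨hconn', by omega, ?_⟩
        rw [hdelta']; omega
    · -- new endpoint
      have hsupp' : G.supp (insert e X) = insert z (G.supp X) := by
        rw [supp_insert, endsF_pair hz]
        ext p
        simp only [Finset.mem_union, Finset.mem_insert, Finset.mem_singleton]
        constructor
        · rintro ((rfl | rfl) | hp)
          · exact Or.inr hvs
          · exact Or.inl rfl
          · exact Or.inr hp
        · rintro (rfl | hp)
          · exact Or.inl (Or.inr rfl)
          · exact Or.inr hp
      have hdelta' : G.delta (insert e X) = G.delta X := by
        rw [delta_def, delta_def, hsupp', hcard', Finset.card_insert_of_notMem hzs]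
        push_cast; ring
      have hls : G.leafSet (insert e X) ⊆ insert z ((G.leafSet X).erase v) := by
        intro p hp
        rw [mem_leafSet] at hp
        obtain ⟨hp1, hp2⟩ := hp
        rw [hdeg'] at hp2
        rw [Finset.mem_insert]
        by_cases hpz : p = z
        · exact Or.inl hpz
        · have hpv : p ≠ v := by rintro rfl; rw [hεv] at hp2; omega
          have hpe : p ∉ G.ends e := by rw [hmem_ends]; tauto
          rw [eps_eq_zero hpe] at hp2
          rw [hsupp', Finset.mem_insert] at hp1
          rcases hp1 with rfl | hp1
          · exact absurd rfl hpz
          · exact Or.inr (Finset.mem_erase.mpr ⟨hpv, mem_leafSet.mpr ⟨hp1, by omega⟩⟩)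
      have hLL' : G.LL (insert e X) ≤ G.LL X := by
        have h1 := Finset.card_le_card hls
        have h2 := Finset.card_insert_le z ((G.leafSet X).erase v)
        have h3 := Finset.card_erase_of_mem hvleaf
        have h4 : 1 ≤ (G.leafSet X).card := Finset.card_pos.mpr ⟨v, hvleaf⟩
        unfold LL; omega
      have hn := LL_nonneg (G := G) (insert e X)
      refine ⟨hconn', by omega, ?_⟩
      rw [hdelta']; omega

end Multigraph
namespace Multigraph

variable {G : Multigraph}

lemma exists_mem_ends (e : G.E) : ∃ w, w ∈ G.ends e := by
  obtain ⟨⟨p, q⟩, hpq⟩ := Quot.exists_rep (G.ends e)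
  exact ⟨p, by rw [← hpq]; simp [Sym2.mem_iff]⟩

lemma supp_univ_eq (hconn : G.GConn) (hE : Nonempty G.E) :
    G.supp Finset.univ = Finset.univ := by
  apply Finset.eq_univ_of_forall
  intro v
  obtain ⟨e₀⟩ := hE
  obtain ⟨p, hp⟩ := exists_mem_ends e₀
  by_cases hvp : v = p
  · exact mem_supp_of_edge (Finset.mem_univ e₀) (hvp ▸ hp)
  · obtain ⟨e, he, hve⟩ := reach_head (hconn.2 v p) hvp
    exact mem_supp_of_edge he hve

lemma noleaf_of_LL_zero {X : Finset G.E} (h : G.LL X = 0) :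
    ∀ v ∈ G.supp X, G.degIn X v ≠ 1 := by
  intro v hv hd
  have : v ∈ G.leafSet X := mem_leafSet.mpr ⟨hv, hd⟩
  have he : G.leafSet X = ∅ := Finset.card_eq_zero.mp (by unfold LL at h; exact_mod_cast h)
  rw [he] at this
  simp at this

lemma out_edge (hconn : G.GConn) {X : Finset G.E} (hc : G.ConnSet X)
    (hne : G.delta X ≠ G.deltaG) :
    ∃ f, f ∉ X ∧ ∃ w, w ∈ G.ends f ∧ w ∈ G.supp X := by
  by_contra hcon
  push_neg at hcon
  have hclosed : ∀ z z', z ∈ G.supp X → G.adjIn Finset.univ z z' → z' ∈ G.supp X := by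
    intro z z' hz hadj
    obtain ⟨g, _, hg⟩ := hadj
    by_cases hgX : g ∈ X
    · exact mem_supp_of_edge hgX (by rw [hg]; simp [Sym2.mem_iff])
    · exact absurd hz (hcon g hgX z (by rw [hg]; simp [Sym2.mem_iff]))
  have hreach : ∀ z z', G.reachIn Finset.univ z z' → z ∈ G.supp X → z' ∈ G.supp X := by
    intro z z' h
    induction h with
    | refl => exact id
    | tail _ h2 ih => exact fun hz => hclosed _ _ (ih hz) h2
  obtain ⟨e₁, he₁⟩ := hc.1
  obtain ⟨p₁, hp₁⟩ := exists_mem_ends e₁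
  have hp₁s : p₁ ∈ G.supp X := mem_supp_of_edge he₁ hp₁
  have hsuniv : G.supp X = Finset.univ := by
    apply Finset.eq_univ_of_forall
    intro v
    exact hreach p₁ v (hconn.2 p₁ v) hp₁s
  have hXuniv : X = Finset.univ := by
    apply Finset.eq_univ_of_forall
    intro f
    by_contra hf
    obtain ⟨w, hw⟩ := exists_mem_ends f
    exact hcon f hf w hw (hsuniv ▸ Finset.mem_univ w)
  apply hne
  have h2 : G.supp Finset.univ = Finset.univ := hXuniv ▸ hsuniv
  rw [hXuniv, delta_def, h2, deltaG]
  simp [Finset.card_univ]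

lemma exists_new_edge_at {X : Finset G.E} {v : G.V} (h : G.degIn X v < G.degIn Finset.univ v) :
    ∃ e, e ∉ X ∧ v ∈ G.ends e := by
  have hsplit : G.degIn (Finset.univ \ X) v + G.degIn X v = G.degIn Finset.univ v := by
    rw [degIn_eq_sum, degIn_eq_sum, degIn_eq_sum]
    exact Finset.sum_sdiff (Finset.subset_univ X)
  have : G.degIn (Finset.univ \ X) v ≠ 0 := by omega
  rw [degIn_eq_sum] at this
  obtain ⟨e, he, hne⟩ := Finset.exists_ne_zero_of_sum_ne_zero this
  rw [Finset.mem_sdiff] at he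
  exact ⟨e, he.2, eps_ne_zero hne⟩

lemma main_grow (hconn : G.GConn) (hnl : G.NoLeaf) (hδ : 1 ≤ G.deltaG) (a b : G.E) :
    ∀ (n : ℕ) (X : Finset G.E), Fintype.card G.E ≤ X.card + n → a ∈ X → b ∈ X →
    G.InvCore X → ∃ C : Finset G.E, a ∈ C ∧ b ∈ C ∧ G.IsBicycleSet C := by
  intro n
  induction n with
  | zero =>
    intro X hle ha hb hI
    have hXu : X = Finset.univ := by
      apply Finset.eq_univ_of_card
      have := Finset.card_le_univ X
      simp only [Nat.add_zero] at hle
      omega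
    subst hXu
    have hsu : G.supp Finset.univ = Finset.univ := supp_univ_eq hconn ⟨a⟩
    have hδu : G.delta Finset.univ = G.deltaG := by
      rw [delta_def, hsu, deltaG]
      simp [Finset.card_univ]
    have hLn := LL_nonneg (G := G) Finset.univ
    have hL0 : G.LL Finset.univ = 0 := by
      have := hI.2.2
      omega
    refine ⟨Finset.univ, ha, hb, hI.1, noleaf_of_LL_zero hL0, ?_⟩
    have := hI.2.2
    omega
  | succ n ih =>
    intro X hle ha hb hI
    by_cases hL : G.LL X = 0
    · have hhs := handshake (G := G) X
      have hdd := delta_def (G := G) X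
      have h0 : 0 ≤ G.delta X := by omega
      have hLn := LL_nonneg (G := G) X
      have h1 : G.delta X ≤ 1 := by have := hI.2.2; omega
      by_cases hδ1 : G.delta X = 1
      · exact ⟨X, ha, hb, hI.1, noleaf_of_LL_zero hL, hδ1⟩
      · have hδ0 : G.delta X = 0 := by omega
        obtain ⟨f, hf, w, hwf, hws⟩ := out_edge hconn hI.1 (by omega)
        obtain ⟨z, hz⟩ : ∃ z, G.ends f = s(w, z) :=
          ⟨Sym2.Mem.other hwf, (Sym2.other_spec hwf).symm⟩
        have hconn' : G.ConnSet (insert f X) := conn_insert hI.1 hwf hws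
        have hcard' : ((insert f X).card : ℤ) = X.card + 1 := by
          rw [Finset.card_insert_of_notMem hf]; push_cast; ring
        have hdeg' : ∀ p, G.degIn (insert f X) p = G.eps f p + G.degIn X p := degIn_insert hf
        have hmem_ends : ∀ p, p ∈ G.ends f ↔ p = w ∨ p = z := by
          intro p; rw [hz, Sym2.mem_iff]
        have hcardle : Fintype.card G.E ≤ (insert f X).card + n := by
          rw [Finset.card_insert_of_notMem hf]; omega
        by_cases hzs : z ∈ G.supp X
        · -- both endpoints old: we found a bicycle
          have hsupp' : G.supp (insert f X) = G.supp X := by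
            rw [supp_insert, endsF_pair hz, Finset.union_eq_right.mpr]
            intro p hp
            rw [Finset.mem_insert, Finset.mem_singleton] at hp
            rcases hp with rfl | rfl
            · exact hws
            · exact hzs
          have hdelta' : G.delta (insert f X) = 1 := by
            rw [delta_def, hsupp', hcard']; omega
          refine ⟨insert f X, Finset.mem_insert_of_mem ha, Finset.mem_insert_of_mem hb,
            hconn', ?_, hdelta'⟩
          intro p hp
          rw [hsupp'] at hp
          have h1p : 1 ≤ G.degIn X p := one_le_degIn_of_mem_supp hp
          have h2p : G.degIn X p ≠ 1 := noleaf_of_LL_zero hL p hp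
          have := degIn_le_of_subset (Finset.subset_insert f X) p
          omega
        · -- one endpoint new: keep growing
          have hzw : z ≠ w := fun hc => hzs (hc ▸ hws)
          have hεw : G.eps f w = 1 := eps_nonloop hz hzw
          have hεz : G.eps f z = 1 := eps_nonloop (hz.trans Sym2.eq_swap) (Ne.symm hzw)
          have hsupp' : G.supp (insert f X) = insert z (G.supp X) := by
            rw [supp_insert, endsF_pair hz]
            ext p
            simp only [Finset.mem_union, Finset.mem_insert, Finset.mem_singleton]
            constructor
            · rintro ((rfl | rfl) | hp)
              · exact Or.inr hws
              · exact Or.inl rfl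
              · exact Or.inr hp
            · rintro (rfl | hp)
              · exact Or.inl (Or.inr rfl)
              · exact Or.inr hp
          have hdelta' : G.delta (insert f X) = 0 := by
            rw [delta_def, hsupp', hcard', Finset.card_insert_of_notMem hzs]
            push_cast
            omega
          have hls : G.leafSet (insert f X) ⊆ {z} := by
            intro p hp
            rw [mem_leafSet] at hp
            obtain ⟨hp1, hp2⟩ := hp
            rw [hdeg'] at hp2
            rw [Finset.mem_singleton]
            by_contra hpz
            have hpw : p ≠ w := by
              intro hc
              rw [hc] at hp2
              have h1p : 1 ≤ G.degIn X w := one_le_degIn_of_mem_supp hws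
              have h2p : G.degIn X w ≠ 1 := noleaf_of_LL_zero hL w hws
              rw [hεw] at hp2; omega
            have hpe : p ∉ G.ends f := by rw [hmem_ends]; tauto
            rw [eps_eq_zero hpe] at hp2
            rw [hsupp', Finset.mem_insert] at hp1
            rcases hp1 with rfl | hp1
            · exact hpz rfl
            · exact noleaf_of_LL_zero hL p hp1 (by omega)
          have hLL' : G.LL (insert f X) ≤ 1 := by
            have := Finset.card_le_card hls
            unfold LL
            simp only [Finset.card_singleton] at this
            exact_mod_cast this
          have hI' : G.InvCore (insert f X) := by
            refine ⟨hconn', by omega, by rw [hdelta']; omega⟩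
          exact ih (insert f X) hcardle (Finset.mem_insert_of_mem ha)
            (Finset.mem_insert_of_mem hb) hI'
    · -- there is a leaf: grow at it
      have hne : (G.leafSet X).Nonempty := by
        rw [Finset.nonempty_iff_ne_empty]
        intro hc
        apply hL
        unfold LL
        rw [hc]
        simp
      obtain ⟨v, hv⟩ := hne
      rw [mem_leafSet] at hv
      obtain ⟨hvs, hvd⟩ := hv
      have hlt : G.degIn X v < G.degIn Finset.univ v := by
        have h1 := degIn_le_of_subset (Finset.subset_univ X) v
        have h2 := hnl v
        omega
      obtain ⟨e, he, hve⟩ := exists_new_edge_at hlt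
      have hI' : G.InvCore (insert e X) := grow_leaf hI he hve hvd
      have hcardle : Fintype.card G.E ≤ (insert e X).card + n := by
        rw [Finset.card_insert_of_notMem he]; omega
      exact ih (insert e X) hcardle (Finset.mem_insert_of_mem ha)
        (Finset.mem_insert_of_mem hb) hI'

end Multigraph
namespace Multigraph

/-- Walks recorded as lists of (edge, next vertex). -/
inductive IsWalk (G : Multigraph) : G.V → G.V → List (G.E × G.V) → Prop
  | nil (v : G.V) : IsWalk G v v []
  | cons {u v w : G.V} (e : G.E) {t : List (G.E × G.V)}
      (h : G.ends e = s(u, v)) (ht : IsWalk G v w t) :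
      IsWalk G u w ((e, v) :: t)

variable {G : Multigraph}

lemma walk_append {y m u : G.V} {s t : List (G.E × G.V)}
    (hs : IsWalk G y m s) (ht : IsWalk G m u t) : IsWalk G y u (s ++ t) := by
  induction hs with
  | nil => exact ht
  | cons e h _ ih => exact IsWalk.cons e h (ih ht)

lemma walk_of_reach {y u : G.V} (h : G.reachIn Finset.univ y u) :
    ∃ t, IsWalk G y u t := by
  induction h with
  | refl => exact ⟨[], IsWalk.nil y⟩
  | tail _ h2 ih =>
    obtain ⟨t, ht⟩ := ih
    obtain ⟨e, _, he⟩ := h2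
    exact ⟨t ++ [(e, _)], walk_append ht (IsWalk.cons e he (IsWalk.nil _))⟩

lemma walk_nil_eq {y u : G.V} (h : IsWalk G y u []) : y = u := by
  cases h; rfl

lemma walk_last_mem {y u : G.V} {t : List (G.E × G.V)} (h : IsWalk G y u t) :
    u ∈ y :: t.map Prod.snd := by
  induction h with
  | nil => simp
  | cons e h _ ih =>
    simp only [List.map_cons, List.mem_cons] at ih ⊢
    tauto

lemma walk_split {y u : G.V} {t : List (G.E × G.V)} (h : IsWalk G y u t) {e : G.E} {z : G.V}
    (hm : (e, z) ∈ t) :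
    ∃ t1 t2 m, t = t1 ++ (e, z) :: t2 ∧ IsWalk G y m t1 ∧
      G.ends e = s(m, z) ∧ IsWalk G z u t2 := by
  induction h with
  | nil => simp at hm
  | @cons y' v w f t' hf ht ih =>
    rcases List.mem_cons.mp hm with heq | hmem
    · have h1 : f = e := congrArg Prod.fst heq.symm
      have h2 : z = v := congrArg Prod.snd heq
      subst h1; subst h2
      exact ⟨[], t', y', rfl, IsWalk.nil y', hf, ht⟩
    · obtain ⟨t1, t2, m, rfl, h1, h2, h3⟩ := ih hmem
      exact ⟨(f, v) :: t1, t2, m, rfl, IsWalk.cons f hf h1, h2, h3⟩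

lemma walk_append_split {y u : G.V} {s t : List (G.E × G.V)}
    (h : IsWalk G y u (s ++ t)) : ∃ m, IsWalk G y m s ∧ IsWalk G m u t := by
  induction s generalizing y with
  | nil => exact ⟨y, IsWalk.nil y, h⟩
  | cons p s' ih =>
    obtain ⟨e, v⟩ := p
    cases h with
    | cons _ hf ht =>
      obtain ⟨m, h1, h2⟩ := ih ht
      exact ⟨m, IsWalk.cons e hf h1, h2⟩

lemma walk_ends_mem {y u : G.V} {t : List (G.E × G.V)} (h : IsWalk G y u t) {f : G.E} {z : G.V}
    (hm : (f, z) ∈ t) :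
    ∃ m, G.ends f = s(m, z) ∧ m ∈ y :: t.map Prod.snd ∧ z ∈ t.map Prod.snd := by
  induction h with
  | nil => simp at hm
  | @cons y' v w f' t' hf ht ih =>
    rcases List.mem_cons.mp hm with heq | hmem
    · have h1 : f' = f := congrArg Prod.fst heq.symm
      have h2 : z = v := congrArg Prod.snd heq
      subst h1; subst h2
      exact ⟨y', hf, by simp, by simp⟩
    · obtain ⟨m, h1, h2, h3⟩ := ih hmem
      refine ⟨m, h1, ?_, ?_⟩ <;> simp only [List.map_cons, List.mem_cons] at h2 h3 ⊢ <;> tauto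

lemma exists_dup {α : Type*} : ∀ (l : List α), ¬ l.Nodup →
    ∃ (x : α) (l1 l2 l3 : List α), l = l1 ++ x :: l2 ++ x :: l3 := by
  intro l
  induction l with
  | nil => intro h; exact absurd List.nodup_nil h
  | cons a l ih =>
    intro h
    by_cases ha : a ∈ l
    · obtain ⟨s, t2, rfl⟩ := List.append_of_mem ha
      exact ⟨a, [], s, t2, rfl⟩
    · have : ¬ l.Nodup := by
        intro hc
        exact h (List.nodup_cons.mpr ⟨ha, hc⟩)
      obtain ⟨x, l1, l2, l3, rfl⟩ := ih this
      exact ⟨x, a :: l1, l2, l3, rfl⟩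

/-- From a walk with a repeated vertex one can extract a strictly shorter walk
with the same endpoints. -/
lemma walk_dedup {y u : G.V} {t : List (G.E × G.V)} (h : IsWalk G y u t)
    (hnd : ¬ (y :: t.map Prod.snd).Nodup) :
    ∃ t', IsWalk G y u t' ∧ t'.length < t.length := by
  by_cases hy : y ∈ t.map Prod.snd
  · obtain ⟨⟨e, z⟩, hmem, hz⟩ := List.mem_map.mp hy
    obtain rfl : z = y := hz
    obtain ⟨t1, t2, m, rfl, _, _, h4⟩ := walk_split h hmem
    refine ⟨t2, h4, ?_⟩
    simp [List.length_append]
    omega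
  · have hnd' : ¬ (t.map Prod.snd).Nodup := by
      intro hc
      exact hnd (List.nodup_cons.mpr ⟨hy, hc⟩)
    rw [List.nodup_iff_count_le_one] at hnd'
    push_neg at hnd'
    obtain ⟨x, hx⟩ := hnd'
    have hxm : x ∈ t.map Prod.snd := by
      rw [← List.count_pos_iff]
      omega
    obtain ⟨⟨e1, z1⟩, hmem1, hz1⟩ := List.mem_map.mp hxm
    obtain rfl : z1 = x := hz1
    obtain ⟨t1, t2, m, rfl, hw1, he1, hw2⟩ := walk_split h hmem1
    have hcnt : (t1.map Prod.snd).count z1 + 1 + (t2.map Prod.snd).count z1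
        = ((t1 ++ (e1, z1) :: t2).map Prod.snd).count z1 := by
      simp [List.count_append]
      omega
    rcases Nat.lt_or_ge 0 ((t1.map Prod.snd).count z1) with hc1 | hc1
    · -- the vertex occurs in t1
      have hmm : z1 ∈ t1.map Prod.snd := List.count_pos_iff.mp hc1
      obtain ⟨⟨e2, z2⟩, hmem2, hz2⟩ := List.mem_map.mp hmm
      obtain rfl : z1 = z2 := hz2.symm
      obtain ⟨r1, r2, m2, rfl, hv1, he2, hv2⟩ := walk_split hw1 hmem2
      refine ⟨r1 ++ (e2, z1) :: t2, walk_append hv1 (IsWalk.cons e2 he2 hw2), ?_⟩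
      simp [List.length_append]
    · -- the vertex occurs in t2
      have hc2 : 0 < (t2.map Prod.snd).count z1 := by omega
      have hmm : z1 ∈ t2.map Prod.snd := List.count_pos_iff.mp hc2
      obtain ⟨⟨e2, z2⟩, hmem2, hz2⟩ := List.mem_map.mp hmm
      obtain rfl : z1 = z2 := hz2.symm
      obtain ⟨r1, r2, m2, rfl, hv1, he2, hv2⟩ := walk_split hw2 hmem2
      refine ⟨t1 ++ (e1, z1) :: r2, walk_append hw1 (IsWalk.cons e1 he1 hv2), ?_⟩
      simp [List.length_append]

end Multigraph
namespace Multigraph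

variable {G : Multigraph}

lemma LL_le_of_subset {X : Finset G.E} {S : Finset G.V} (h : G.leafSet X ⊆ S) :
    G.LL X ≤ S.card := by
  unfold LL
  exact_mod_cast Finset.card_le_card h

/-- Two distinct edges sharing a vertex form a valid starting configuration. -/
lemma two_edges {a' b : G.E} (hab : a' ≠ b) {u : G.V} (hua : u ∈ G.ends a')
    (hub : u ∈ G.ends b) : G.InvCore (insert a' {b}) := by
  obtain ⟨p, hp⟩ : ∃ p, G.ends a' = s(u, p) :=
    ⟨Sym2.Mem.other hua, (Sym2.other_spec hua).symm⟩
  obtain ⟨q, hq⟩ : ∃ q, G.ends b = s(u, q) :=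
    ⟨Sym2.Mem.other hub, (Sym2.other_spec hub).symm⟩
  have hanb : a' ∉ ({b} : Finset G.E) := by simp [hab]
  have hcard : ((insert a' {b} : Finset G.E).card : ℤ) = 2 := by
    rw [Finset.card_insert_of_notMem hanb, Finset.card_singleton]
    norm_num
  have hsupp : G.supp (insert a' {b}) = ({u, p} : Finset G.V) ∪ {u, q} := by
    rw [supp_insert, supp_singleton, endsF_pair hp, endsF_pair hq]
  have hdeg : ∀ w, G.degIn (insert a' {b}) w = G.eps a' w + G.eps b w := by
    intro w
    rw [degIn_insert hanb, degIn_eq_sum, Finset.sum_singleton]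
  have hconn : G.ConnSet (insert a' {b}) := by
    apply conn_insert (connSet_singleton b) hua
    rw [supp_singleton, mem_endsF]
    exact hub
  have hLn := LL_nonneg (G := G) (insert a' {b})
  by_cases hpu : p = u <;> by_cases hqu : q = u
  · -- both loops at u
    have hp' : G.ends a' = s(u, u) := by rw [hp, hpu]
    have hq' : G.ends b = s(u, u) := by rw [hq, hqu]
    have hss : G.supp (insert a' {b}) = {u} := by
      rw [hsupp]
      ext w
      simp only [Finset.mem_union, Finset.mem_insert, Finset.mem_singleton, hpu, hqu]
      tauto
    have hδ : G.delta (insert a' {b}) = 1 := by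
      rw [delta_def, hss, hcard, Finset.card_singleton]
      norm_num
    have hls : G.leafSet (insert a' {b}) ⊆ (∅ : Finset G.V) := by
      intro w hw
      rw [mem_leafSet, hss, Finset.mem_singleton] at hw
      obtain ⟨rfl, hw2⟩ := hw
      rw [hdeg, eps_loop hp', eps_loop hq'] at hw2
      omega
    have h1 := LL_le_of_subset hls
    rw [Finset.card_empty] at h1
    exact ⟨hconn, by omega, by omega⟩
  · -- a' loop at u, b not a loop
    have hp' : G.ends a' = s(u, u) := by rw [hp, hpu]
    have hss : G.supp (insert a' {b}) = {u, q} := by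
      rw [hsupp]
      ext w
      simp only [Finset.mem_union, Finset.mem_insert, Finset.mem_singleton, hpu]
      tauto
    have huq : u ∉ ({q} : Finset G.V) := by
      simp only [Finset.mem_singleton]
      exact fun h => hqu h.symm
    have hδ : G.delta (insert a' {b}) = 0 := by
      rw [delta_def, hss, hcard, Finset.card_insert_of_notMem huq, Finset.card_singleton]
      norm_num
    have hls : G.leafSet (insert a' {b}) ⊆ {q} := by
      intro w hw
      rw [mem_leafSet, hss] at hw
      obtain ⟨hw1, hw2⟩ := hw
      rw [Finset.mem_insert, Finset.mem_singleton] at hw1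
      rw [Finset.mem_singleton]
      rcases hw1 with rfl | rfl
      · rw [hdeg, eps_loop hp', eps_nonloop hq hqu] at hw2
        omega
      · rfl
    have h1 := LL_le_of_subset hls
    rw [Finset.card_singleton] at h1
    exact ⟨hconn, by omega, by omega⟩
  · -- b loop at u, a' not a loop
    have hq' : G.ends b = s(u, u) := by rw [hq, hqu]
    have hss : G.supp (insert a' {b}) = {u, p} := by
      rw [hsupp]
      ext w
      simp only [Finset.mem_union, Finset.mem_insert, Finset.mem_singleton, hqu]
      tauto
    have hup : u ∉ ({p} : Finset G.V) := by
      simp only [Finset.mem_singleton]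
      exact fun h => hpu h.symm
    have hδ : G.delta (insert a' {b}) = 0 := by
      rw [delta_def, hss, hcard, Finset.card_insert_of_notMem hup, Finset.card_singleton]
      norm_num
    have hls : G.leafSet (insert a' {b}) ⊆ {p} := by
      intro w hw
      rw [mem_leafSet, hss] at hw
      obtain ⟨hw1, hw2⟩ := hw
      rw [Finset.mem_insert, Finset.mem_singleton] at hw1
      rw [Finset.mem_singleton]
      rcases hw1 with rfl | rfl
      · rw [hdeg, eps_loop hq', eps_nonloop hp hpu] at hw2
        omega
      · rfl
    have h1 := LL_le_of_subset hls
    rw [Finset.card_singleton] at h1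
    exact ⟨hconn, by omega, by omega⟩
  · by_cases hpq : p = q
    · -- parallel edges
      have hq' : G.ends b = s(u, p) := by rw [hq, ← hpq]
      have hss : G.supp (insert a' {b}) = {u, p} := by
        rw [hsupp]
        ext w
        simp only [Finset.mem_union, Finset.mem_insert, Finset.mem_singleton, hpq]
        tauto
      have hup : u ∉ ({p} : Finset G.V) := by
        simp only [Finset.mem_singleton]
        exact fun h => hpu h.symm
      have hδ : G.delta (insert a' {b}) = 0 := by
        rw [delta_def, hss, hcard, Finset.card_insert_of_notMem hup, Finset.card_singleton]
        norm_num
      have hls : G.leafSet (insert a' {b}) ⊆ (∅ : Finset G.V) := by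
        intro w hw
        rw [mem_leafSet, hss] at hw
        obtain ⟨hw1, hw2⟩ := hw
        rw [Finset.mem_insert, Finset.mem_singleton] at hw1
        rcases hw1 with rfl | rfl
        · rw [hdeg, eps_nonloop hp hpu, eps_nonloop hq' hpu] at hw2
          omega
        · rw [hdeg, eps_nonloop (hp.trans Sym2.eq_swap) (fun hc => hpu hc.symm),
            eps_nonloop (hq'.trans Sym2.eq_swap) (fun hc => hpu hc.symm)] at hw2
          omega
      have h1 := LL_le_of_subset hls
      rw [Finset.card_empty] at h1
      exact ⟨hconn, by omega, by omega⟩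
    · -- a path of length two
      have hss : G.supp (insert a' {b}) = {u, p, q} := by
        rw [hsupp]
        ext w
        simp only [Finset.mem_union, Finset.mem_insert, Finset.mem_singleton]
        tauto
      have hδ : G.delta (insert a' {b}) = -1 := by
        rw [delta_def, hss, hcard]
        rw [Finset.card_insert_of_notMem (by
          simp only [Finset.mem_insert, Finset.mem_singleton]
          push_neg
          exact ⟨fun h => hpu h.symm, fun h => hqu h.symm⟩),
          Finset.card_insert_of_notMem (by simp [hpq]), Finset.card_singleton]
        norm_num
      have hls : G.leafSet (insert a' {b}) ⊆ {p, q} := by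
        intro w hw
        rw [mem_leafSet, hss] at hw
        obtain ⟨hw1, hw2⟩ := hw
        rw [Finset.mem_insert, Finset.mem_insert, Finset.mem_singleton] at hw1
        rw [Finset.mem_insert, Finset.mem_singleton]
        rcases hw1 with rfl | hw1
        · rw [hdeg, eps_nonloop hp hpu, eps_nonloop hq hqu] at hw2
          omega
        · exact hw1
      have h1 := LL_le_of_subset hls
      have h2 : ({p, q} : Finset G.V).card ≤ 2 := by
        refine le_trans (Finset.card_insert_le p {q}) ?_
        simp
      have h3 : (({p, q} : Finset G.V).card : ℤ) ≤ 2 := by exact_mod_cast h2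
      exact ⟨hconn, by omega, by omega⟩

end Multigraph
namespace Multigraph

variable {G : Multigraph}

/-- A single edge is a valid starting configuration. -/
lemma one_edge (a : G.E) : G.InvCore {a} := by
  obtain ⟨u, hu⟩ := exists_mem_ends a
  obtain ⟨p, hp⟩ : ∃ p, G.ends a = s(u, p) :=
    ⟨Sym2.Mem.other hu, (Sym2.other_spec hu).symm⟩
  have hcard : (({a} : Finset G.E).card : ℤ) = 1 := by simp
  have hsupp : G.supp {a} = ({u, p} : Finset G.V) := by
    rw [supp_singleton, endsF_pair hp]
  have hdeg : ∀ w, G.degIn {a} w = G.eps a w := by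
    intro w
    rw [degIn_eq_sum, Finset.sum_singleton]
  have hLn := LL_nonneg (G := G) {a}
  by_cases hpu : p = u
  · have hp' : G.ends a = s(u, u) := by rw [hp, hpu]
    have hss : G.supp {a} = {u} := by
      rw [hsupp]
      ext w
      simp only [Finset.mem_insert, Finset.mem_singleton, hpu]
      tauto
    have hδ : G.delta {a} = 0 := by
      rw [delta_def, hss, hcard, Finset.card_singleton]
      norm_num
    have hls : G.leafSet {a} ⊆ (∅ : Finset G.V) := by
      intro w hw
      rw [mem_leafSet, hss, Finset.mem_singleton] at hw
      obtain ⟨rfl, hw2⟩ := hw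
      rw [hdeg, eps_loop hp'] at hw2
      omega
    have h1 := LL_le_of_subset hls
    rw [Finset.card_empty] at h1
    exact ⟨connSet_singleton a, by omega, by omega⟩
  · have hup : u ∉ ({p} : Finset G.V) := by
      simp only [Finset.mem_singleton]
      exact fun h => hpu h.symm
    have hδ : G.delta {a} = -1 := by
      rw [delta_def, hsupp, hcard, Finset.card_insert_of_notMem hup, Finset.card_singleton]
      norm_num
    have hls : G.leafSet {a} ⊆ ({u, p} : Finset G.V) := by
      intro w hw
      rw [mem_leafSet, hsupp] at hw
      exact hw.1
    have h1 := LL_le_of_subset hls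
    have h2 : ({u, p} : Finset G.V).card ≤ 2 := by
      refine le_trans (Finset.card_insert_le u {p}) ?_
      simp
    have h3 : (({u, p} : Finset G.V).card : ℤ) ≤ 2 := by exact_mod_cast h2
    exact ⟨connSet_singleton a, by omega, by omega⟩

/-- The inductive construction of the starting configuration from a minimal walk. -/
lemma base_ind {b : G.E} {u : G.V} (hub : u ∈ G.ends b) :
    ∀ (t : List (G.E × G.V)) (y : G.V) (a' : G.E),
      IsWalk G y u t → y ∈ G.ends a' → a' ≠ b →
      a' ∉ t.map Prod.fst → b ∉ t.map Prod.fst →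
      (y :: t.map Prod.snd).Nodup →
      (∀ z ∈ y :: t.map Prod.snd, z ∈ G.ends b → z = u) →
      G.InvCore (insert a' (insert b (t.map Prod.fst).toFinset)) := by
  intro t
  induction t with
  | nil =>
    intro y a' hw hya hab _ _ _ _
    obtain rfl : y = u := walk_nil_eq hw
    have hset : (insert b ((List.map Prod.fst ([] : List (G.E × G.V))).toFinset) : Finset G.E)
        = {b} := by simp
    rw [hset]
    exact two_edges hab hya hub
  | cons hd t' ih =>
    obtain ⟨e, v⟩ := hd
    intro y a' hw hya hab hat hbt hnd hzcond
    cases hw with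
    | cons _ he hw' =>
      simp only [List.map_cons, List.mem_cons] at hat hbt
      push_neg at hat hbt
      obtain ⟨hae, hat'⟩ := hat
      obtain ⟨hbe, hbt'⟩ := hbt
      simp only [List.map_cons] at hnd
      have hy_nin : y ∉ v :: t'.map Prod.snd := (List.nodup_cons.mp hnd).1
      have hnd' : (v :: t'.map Prod.snd).Nodup := (List.nodup_cons.mp hnd).2
      have hulast : u ∈ v :: t'.map Prod.snd := walk_last_mem hw'
      have hyu : y ≠ u := fun h => hy_nin (h ▸ hulast)
      have hyv : y ≠ v := fun h => hy_nin (h ▸ List.mem_cons_self (a := v))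
      have hy_not_ends : ∀ f ∈ t'.map Prod.fst, y ∉ G.ends f := by
        intro f hf hyf
        obtain ⟨⟨f1, z0⟩, hmem, hf1⟩ := List.mem_map.mp hf
        obtain rfl : f1 = f := hf1
        obtain ⟨m, hm1, hm2, hm3⟩ := walk_ends_mem hw' hmem
        rw [hm1, Sym2.mem_iff] at hyf
        rcases hyf with rfl | rfl
        · exact hy_nin hm2
        · exact hy_nin (List.mem_cons_of_mem _ hm3)
      have hye : y ∈ G.ends e := by rw [he]; simp
      have hve : v ∈ G.ends e := by rw [he]; simp
      have hent' : e ∉ t'.map Prod.fst := fun hc => hy_not_ends e hc hye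
      have hIY := ih v e hw' hve (fun h => hbe h.symm) hent' hbt' hnd'
        (fun z hz hzb => hzcond z (List.mem_cons_of_mem _ hz) hzb)
      have hstep : (insert a' (insert b (((e, v) :: t').map Prod.fst).toFinset))
          = insert a' (insert e (insert b (t'.map Prod.fst).toFinset)) := by
        simp only [List.map_cons, List.toFinset_cons]
        rw [Finset.insert_comm b e ((t'.map Prod.fst).toFinset)]
      rw [hstep]
      have hebT : e ∉ insert b (t'.map Prod.fst).toFinset := by
        simp only [Finset.mem_insert, List.mem_toFinset]
        push_neg
        exact ⟨fun h => hbe h.symm, hent'⟩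
      have hbT : b ∉ (t'.map Prod.fst).toFinset := by
        rw [List.mem_toFinset]; exact hbt'
      have ha'X : a' ∉ insert e (insert b (t'.map Prod.fst).toFinset) := by
        simp only [Finset.mem_insert, List.mem_toFinset]
        push_neg
        exact ⟨hae, hab, hat'⟩
      have hdeg1 : G.degIn (insert e (insert b (t'.map Prod.fst).toFinset)) y = 1 := by
        rw [degIn_insert hebT, degIn_insert hbT]
        have h1 : G.eps e y = 1 := eps_nonloop he (Ne.symm hyv)
        have h2 : G.eps b y = 0 :=
          eps_eq_zero (fun hyb => hyu (hzcond y (List.mem_cons_self (a := y)) hyb))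
        have h3 : G.degIn (t'.map Prod.fst).toFinset y = 0 := by
          rw [degIn_eq_sum]
          apply Finset.sum_eq_zero
          intro f hf
          exact eps_eq_zero (hy_not_ends f (List.mem_toFinset.mp hf))
        omega
      exact grow_leaf hIY ha'X hya hdeg1

end Multigraph
/-- In a connected leafless graph `G` with `Δ(G) ≥ 1` (a cactus), every two
edges lie on a common bicycle subgraph. -/
theorem stmt_8 (G : Multigraph) (hconn : G.GConn) (hnl : G.NoLeaf)
    (hδ : 1 ≤ G.deltaG) :
    ∀ a b : G.E, ∃ C : Finset G.E, a ∈ C ∧ b ∈ C ∧ G.IsBicycleSet C := by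
  intro a b
  by_cases hab : a = b
  · subst hab
    refine Multigraph.main_grow hconn hnl hδ a a (Fintype.card G.E) {a} ?_
      (Finset.mem_singleton_self a) (Finset.mem_singleton_self a) (Multigraph.one_edge a)
    have : ({a} : Finset G.E).card = 1 := Finset.card_singleton a
    omega
  · -- find a minimal walk between an endpoint of `a` and an endpoint of `b`
    obtain ⟨y0, hy0⟩ := Multigraph.exists_mem_ends a
    obtain ⟨u0, hu0⟩ := Multigraph.exists_mem_ends b
    obtain ⟨t0, ht0⟩ := Multigraph.walk_of_reach (hconn.2 y0 u0)
    have hex : ∃ n : ℕ, ∃ y u : G.V, ∃ t : List (G.E × G.V),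
        y ∈ G.ends a ∧ u ∈ G.ends b ∧ Multigraph.IsWalk G y u t ∧ t.length = n :=
      ⟨t0.length, y0, u0, t0, hy0, hu0, ht0, rfl⟩
    obtain ⟨y, u, t, hya, hub, hw, hlen⟩ := Nat.find_spec hex
    have hmin : ∀ (t' : List (G.E × G.V)) (y' u' : G.V), y' ∈ G.ends a → u' ∈ G.ends b →
        Multigraph.IsWalk G y' u' t' → t.length ≤ t'.length := by
      intro t' y' u' hy' hu' hw'
      by_contra hcon
      push_neg at hcon
      have hlt : t'.length < Nat.find hex := by omega
      exact Nat.find_min hex hlt ⟨y', u', t', hy', hu', hw', rfl⟩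
    have hnd : (y :: t.map Prod.snd).Nodup := by
      by_contra h
      obtain ⟨t2, hw2, hlt⟩ := Multigraph.walk_dedup hw h
      have := hmin t2 y u hya hub hw2
      omega
    have hat : a ∉ t.map Prod.fst := by
      intro hc
      obtain ⟨⟨f, z⟩, hmem, hf⟩ := List.mem_map.mp hc
      obtain rfl : f = a := hf
      obtain ⟨t1, t2, m, heq, hw1, hends, hw2⟩ := Multigraph.walk_split hw hmem
      have hza : z ∈ G.ends f := by rw [hends]; simp
      have hle := hmin t2 z u hza hub hw2
      rw [heq] at hle
      simp [List.length_append] at hle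
      omega
    have hbt : b ∉ t.map Prod.fst := by
      intro hc
      obtain ⟨⟨f, z⟩, hmem, hf⟩ := List.mem_map.mp hc
      obtain rfl : f = b := hf
      obtain ⟨t1, t2, m, heq, hw1, hends, hw2⟩ := Multigraph.walk_split hw hmem
      have hmb : m ∈ G.ends f := by rw [hends]; simp
      have hle := hmin t1 y m hya hmb hw1
      rw [heq] at hle
      simp [List.length_append] at hle
    have hzcond : ∀ z ∈ y :: t.map Prod.snd, z ∈ G.ends b → z = u := by
      intro z hz hzb
      by_contra hzu
      rcases List.mem_cons.mp hz with heq0 | hz2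
      · have hle := hmin [] z z (heq0 ▸ hya) hzb (Multigraph.IsWalk.nil z)
        have ht0' : t = [] := List.length_eq_zero_iff.mp (by simpa using hle)
        subst ht0'
        exact hzu (heq0.symm ▸ Multigraph.walk_nil_eq hw)
      · obtain ⟨⟨f, z1⟩, hmem, hf1⟩ := List.mem_map.mp hz2
        obtain rfl : z1 = z := hf1
        obtain ⟨t1, t2, m, heq, hw1, hends, hw2⟩ := Multigraph.walk_split hw hmem
        have hwz : Multigraph.IsWalk G y z1 (t1 ++ [(f, z1)]) :=
          Multigraph.walk_append hw1 (Multigraph.IsWalk.cons f hends (Multigraph.IsWalk.nil z1))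
        have hle := hmin _ y z1 hya hzb hwz
        have l1 : (t1 ++ (f, z1) :: t2).length = t1.length + 1 + t2.length := by
          rw [List.length_append, List.length_cons]
          omega
        have l2 : (t1 ++ [(f, z1)]).length = t1.length + 1 := by
          rw [List.length_append, List.length_singleton]
        rw [heq, l1, l2] at hle
        have ht2' : t2 = [] := List.length_eq_zero_iff.mp (by omega)
        subst ht2'
        exact hzu (Multigraph.walk_nil_eq hw2)
    have hbase := Multigraph.base_ind hub t y a hw hya hab hat hbt hnd hzcond
    exact Multigraph.main_grow hconn hnl hδ a b (Fintype.card G.E) _ (Nat.le_add_left _ _)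
      (Finset.mem_insert_self a _) (Finset.mem_insert_of_mem (Finset.mem_insert_self b _)) hbase
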